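/- Fix r₁, r₂ > 0 and equip sp(2) = {((x,y),(-\bar{y},z)) : x,z pure imaginary, y ∈ ℍ} with the inner product ⟨ξ₁, ξ₂⟩ = (r₁/2)⟨x₁,x₂⟩ + ⟨y₁,y₂⟩ + (r₂/2)⟨z₁,z₂⟩ (Euclidean inner products on ℍ ≅ ℝ⁴). Then for all ξ₁, ξ₂, ξ₃ ∈ sp(2): -⟨ξ₁, [ξ₂,ξ₃]⟩ + ⟨ξ₂, [ξ₃,ξ₁]⟩ = ⟨(1-r₁)(x₁y₂ + x₂y₁) + (r₂-1)(y₁z₂ + y₂z₁), y₃⟩. -/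

import Mathlib

open Quaternion
open scoped RealInnerProductSpace

/-- The inner product on sp(2) = {((x,y),(-conj y,z)) : Re x = Re z = 0}
determined by the left-invariant metric g_{(r₁,r₂)}, applied to component triples. -/
noncomputable def sp2Inner (r₁ r₂ : ℝ) (x₁ y₁ z₁ x₂ y₂ z₂ : ℍ[ℝ]) : ℝ :=
  (r₁ / 2) * ⟪x₁, x₂⟫ + ⟪y₁, y₂⟫ + (r₂ / 2) * ⟪z₁, z₂⟫

/-- x-component of the bracket [ξ₁,ξ₂] in sp(2). -/
noncomputable def brX (x₁ y₁ x₂ y₂ : ℍ[ℝ]) : ℍ[ℝ] := x₁ * x₂ - x₂ * x₁ + y₂ * star y₁ - y₁ * star y₂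

/-- y-component of the bracket [ξ₁,ξ₂] in sp(2). -/
noncomputable def brY (x₁ y₁ z₁ x₂ y₂ z₂ : ℍ[ℝ]) : ℍ[ℝ] := x₁ * y₂ - x₂ * y₁ + y₁ * z₂ - y₂ * z₁

/-- z-component of the bracket [ξ₁,ξ₂] in sp(2). -/
noncomputable def brZ (y₁ z₁ y₂ z₂ : ℍ[ℝ]) : ℍ[ℝ] := z₁ * z₂ - z₂ * z₁ + star y₂ * y₁ - star y₁ * y₂

/-- The Koszul-formula identity determining the Levi-Civita connection of g_{(r₁,r₂)}:
  -⟨ξ₁,[ξ₂,ξ₃]⟩ + ⟨ξ₂,[ξ₃,ξ₁]⟩ = ⟨(1-r₁)(x₁y₂+x₂y₁) + (r₂-1)(y₁z₂+y₂z₁), y₃⟩. -/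
theorem sp2_koszul_identity (r₁ r₂ : ℝ) (h₁ : 0 < r₁) (h₂ : 0 < r₂)
    (x₁ y₁ z₁ x₂ y₂ z₂ x₃ y₃ z₃ : ℍ[ℝ])
    (hx₁ : x₁.re = 0) (hz₁ : z₁.re = 0) (hx₂ : x₂.re = 0) (hz₂ : z₂.re = 0)
    (hx₃ : x₃.re = 0) (hz₃ : z₃.re = 0) :
    -sp2Inner r₁ r₂ x₁ y₁ z₁ (brX x₂ y₂ x₃ y₃) (brY x₂ y₂ z₂ x₃ y₃ z₃) (brZ y₂ z₂ y₃ z₃)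
      + sp2Inner r₁ r₂ x₂ y₂ z₂ (brX x₃ y₃ x₁ y₁) (brY x₃ y₃ z₃ x₁ y₁ z₁) (brZ y₃ z₃ y₁ z₁)
    = ⟪(1 - r₁) • (x₁ * y₂ + x₂ * y₁) + (r₂ - 1) • (y₁ * z₂ + y₂ * z₁), y₃⟫ := by
  simp only [sp2Inner, brX, brY, brZ, Quaternion.inner_def, Quaternion.re_mul,
    Quaternion.re_add, Quaternion.re_sub, Quaternion.imI_add, Quaternion.imI_sub,
    Quaternion.imJ_add, Quaternion.imJ_sub, Quaternion.imK_add, Quaternion.imK_sub,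
    Quaternion.imI_mul, Quaternion.imJ_mul, Quaternion.imK_mul,
    Quaternion.re_star, Quaternion.imI_star, Quaternion.imJ_star, Quaternion.imK_star,
    Quaternion.re_smul, Quaternion.imI_smul, Quaternion.imJ_smul, Quaternion.imK_smul,
    smul_eq_mul, hx₁, hx₂, hx₃, hz₁, hz₂, hz₃]
  ring
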